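/- Let P be a polynomial of degree at most N on ℝ in one variable, with all complex roots lying in the disc {|z| ≤ 2} and leading coefficient 1. Then for ε > 0, the set {t ∈ [-1,1] : |P(t)| < ε · sup_{[-1,1]}|P|} is contained in a union of at most 2N intervals, each of length at most C_N ε^{1/N}. -/

import Mathlib

lemma aux_pow_le_prod (s : Multiset ℝ) (r : ℝ) (hr : 0 ≤ r) (h : ∀ x ∈ s, r ≤ x) :
    r ^ Multiset.card s ≤ s.prod := by
  induction s using Multiset.induction with
  | empty => simp
  | cons a s ih =>
    simp only [Multiset.prod_cons, Multiset.card_cons, pow_succ']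
    have ha : r ≤ a := h a (Multiset.mem_cons_self a s)
    have hs : r ^ Multiset.card s ≤ s.prod := ih fun x hx => h x (Multiset.mem_cons_of_mem hx)
    exact mul_le_mul ha hs (pow_nonneg hr _) (hr.trans ha)

lemma aux_prod_le_pow (s : Multiset ℝ) (B : ℝ) (h0 : ∀ x ∈ s, 0 ≤ x) (h : ∀ x ∈ s, x ≤ B) :
    s.prod ≤ B ^ Multiset.card s := by
  induction s using Multiset.induction with
  | empty => simp
  | cons a s ih =>
    simp only [Multiset.prod_cons, Multiset.card_cons, pow_succ']
    have ha : a ≤ B := h a (Multiset.mem_cons_self a s)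
    have hs : s.prod ≤ B ^ Multiset.card s :=
      ih (fun x hx => h0 x (Multiset.mem_cons_of_mem hx)) (fun x hx => h x (Multiset.mem_cons_of_mem hx))
    have hsp : 0 ≤ s.prod := Multiset.prod_nonneg fun x hx => h0 x (Multiset.mem_cons_of_mem hx)
    exact mul_le_mul ha hs hsp ((h0 a (Multiset.mem_cons_self a s)).trans ha)

theorem stmt5 (N : ℕ) (hN : 0 < N) :
    ∃ C : ℝ, 0 < C ∧ ∀ (P : Polynomial ℝ), P.Monic → P.natDegree = N →
      (∀ z : ℂ, (P.map (algebraMap ℝ ℂ)).IsRoot z → ‖z‖ ≤ 2) →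
      ∀ ε : ℝ, 0 < ε →
      ∃ (m : ℕ) (a b : Fin m → ℝ), m ≤ 2 * N ∧
        (∀ j, b j - a j ≤ C * ε ^ ((1 : ℝ) / N)) ∧
        {t ∈ Set.Icc (-1 : ℝ) 1 |
            |P.eval t| < ε * sSup ((fun t => |P.eval t|) '' Set.Icc (-1 : ℝ) 1)} ⊆
          ⋃ j, Set.Icc (a j) (b j) := by
  refine ⟨6, by norm_num, ?_⟩
  intro P hP hdeg hroots ε hε
  set Q := P.map (algebraMap ℝ ℂ) with hQdef
  have hQm : Q.Monic := hP.map _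
  have hQ0 : Q ≠ 0 := hQm.ne_zero
  have hQdeg : Q.natDegree = N := by rw [hQdef, hP.natDegree_map]; exact hdeg
  have hsplits : Q.Splits := IsAlgClosed.splits Q
  have hcard : Multiset.card Q.roots = N := by
    rw [← hQdeg]; exact (Polynomial.splits_iff_card_roots.mp hsplits)
  -- evaluation as product over roots
  have heval : ∀ z : ℂ, Q.eval z = (Q.roots.map (fun w => z - w)).prod := by
    intro z
    conv_lhs => rw [hsplits.eq_prod_roots_of_monic hQm]
    simp [Polynomial.eval_multiset_prod, Multiset.map_map]
  have hevalR : ∀ t : ℝ, |P.eval t| = (Q.roots.map (fun w => ‖(t : ℂ) - w‖)).prod := by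
    intro t
    have h1 : Q.eval (t : ℂ) = ((P.eval t : ℝ) : ℂ) := by
      rw [hQdef, Polynomial.eval_map,
        show ((t:ℂ)) = algebraMap ℝ ℂ t from rfl, Polynomial.eval₂_at_apply]
      rfl
    have h2 : ‖Q.eval (t : ℂ)‖ = |P.eval t| := by
      rw [h1, Complex.norm_real, Real.norm_eq_abs]
    rw [← h2, heval t, show ‖(Multiset.map (fun w => (t:ℂ) - w) Q.roots).prod‖ = (normHom : ℂ →*₀ ℝ) (Multiset.map (fun w => (t:ℂ) - w) Q.roots).prod from rfl, map_multiset_prod, Multiset.map_map]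
    rfl
  -- sup bound
  set S := sSup ((fun t => |P.eval t|) '' Set.Icc (-1 : ℝ) 1) with hSdef
  have hS : S ≤ 3 ^ N := by
    apply Real.sSup_le
    · rintro x ⟨t, ht, rfl⟩
      show |P.eval t| ≤ 3 ^ N
      rw [hevalR t]
      have := aux_prod_le_pow (Q.roots.map (fun w => ‖(t : ℂ) - w‖)) 3
        (by intro x hx; obtain ⟨w, hw, rfl⟩ := Multiset.mem_map.mp hx; exact (norm_nonneg _))
        (by intro x hx
            obtain ⟨w, hw, rfl⟩ := Multiset.mem_map.mp hx
            have h1 : ‖(t : ℂ) - w‖ ≤ ‖(t : ℂ)‖ + ‖w‖ :=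
              norm_sub_le _ _
            have h2 : ‖(t : ℂ)‖ ≤ 1 := by
              rw [Complex.norm_real, Real.norm_eq_abs]; exact abs_le.mpr ⟨ht.1, ht.2⟩
            have h3 : ‖w‖ ≤ 2 := hroots w ((Polynomial.mem_roots hQ0).mp hw)
            linarith)
      simpa [Multiset.card_map, hcard] using this
    · positivity
  set r := 3 * ε ^ ((1 : ℝ) / N) with hrdef
  have hrpos : 0 < r := by positivity
  have hrpow : r ^ N = 3 ^ N * ε := by
    rw [hrdef, mul_pow]
    congr 1
    rw [← Real.rpow_natCast (ε ^ ((1:ℝ)/N)) N, ← Real.rpow_mul hε.le]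
    rw [one_div, inv_mul_cancel₀ (by exact_mod_cast hN.ne' : (N:ℝ) ≠ 0), Real.rpow_one]
  -- indexing roots
  set s := Q.roots.toFinset with hsdef
  refine ⟨s.card, fun j => ((s.equivFin.symm j : ℂ)).re - r, fun j => ((s.equivFin.symm j : ℂ)).re + r,
    ?_, ?_, ?_⟩
  · calc s.card ≤ Multiset.card Q.roots := Q.roots.toFinset_card_le
    _ = N := hcard
    _ ≤ 2 * N := by omega
  · intro j; rw [hrdef]; ring_nf; linarith [hrpos]
  · rintro t ⟨ht, htlt⟩
    have hlt : |P.eval t| < r ^ N := by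
      calc |P.eval t| < ε * S := htlt
      _ ≤ ε * 3 ^ N := by nlinarith
      _ = r ^ N := by rw [hrpow]; ring
    -- find a close root
    have hexists : ∃ w ∈ Q.roots, ‖(t : ℂ) - w‖ < r := by
      by_contra hcon
      push_neg at hcon
      have := aux_pow_le_prod (Q.roots.map (fun w => ‖(t : ℂ) - w‖)) r hrpos.le
        (by intro x hx; obtain ⟨w, hw, rfl⟩ := Multiset.mem_map.mp hx; exact hcon w hw)
      rw [Multiset.card_map, hcard] at this
      rw [hevalR t] at hlt
      linarith
    obtain ⟨w, hw, hwlt⟩ := hexists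
    have hwmem : w ∈ s := Multiset.mem_toFinset.mpr hw
    refine Set.mem_iUnion.mpr ⟨s.equivFin ⟨w, hwmem⟩, ?_⟩
    simp only [Equiv.symm_apply_apply, Set.mem_Icc]
    have : |t - w.re| < r := by
      have h1 : |t - w.re| ≤ ‖(t : ℂ) - w‖ := by
        have : ((t : ℂ) - w).re = t - w.re := by simp
        calc |t - w.re| = |((t : ℂ) - w).re| := by rw [this]
        _ ≤ ‖(t : ℂ) - w‖ := Complex.abs_re_le_norm _
      linarith
    have := abs_lt.mp this
    constructor <;> linarith [this.1, this.2]
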